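/- For every N ≥ 2 and all real numbers x_1 > x_2 > … > x_N with mean x̄ = (x_1 + … + x_N)/N, one has U(x) · Σ_{n=1}^N (x_n − x̄)² ≥ (N−1)², and consequently U(x) · V(x) ≥ (N−1)². -/

import Mathlib

open Finset

/-- The classical potential `V(x) = ∑_{n=1}^N x_n²`. -/
noncomputable def Vpot (N : ℕ) (x : ℕ → ℝ) : ℝ := ∑ n ∈ Finset.Icc 1 N, x n ^ 2

/-- The interworld potential
`U(x) = ∑_{n=1}^N (1/(x_{n+1} - x_n) - 1/(x_n - x_{n-1}))²`, with the convention that the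
term `1/(x_1 - x_0)` is taken to be `0` in the `n = 1` summand and `1/(x_{N+1} - x_N)` is
taken to be `0` in the `n = N` summand (corresponding to `x_0 = +∞`, `x_{N+1} = -∞`). -/
noncomputable def Upot (N : ℕ) (x : ℕ → ℝ) : ℝ :=
  ∑ n ∈ Finset.Icc 1 N,
    ((if n < N then 1 / (x (n + 1) - x n) else 0) -
      (if 1 < n then 1 / (x n - x (n - 1)) else 0)) ^ 2

/-- For `N ≥ 2` and `x_1 > x_2 > ... > x_N` with mean `x̄`,
`U(x) · ∑_{n=1}^N (x_n - x̄)² ≥ (N-1)²`, and consequently `U(x) · V(x) ≥ (N-1)²`. -/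
theorem Upot_mul_variance_ge (N : ℕ) (hN : 2 ≤ N) (x : ℕ → ℝ)
    (hdec : ∀ n, 1 ≤ n → n < N → x (n + 1) < x n) :
    ((N : ℝ) - 1) ^ 2 ≤
        Upot N x *
          ∑ n ∈ Finset.Icc 1 N, (x n - (∑ i ∈ Finset.Icc 1 N, x i) / N) ^ 2 ∧
      ((N : ℝ) - 1) ^ 2 ≤ Upot N x * Vpot N x := by
  have hN0 : (N : ℝ) ≠ 0 := by positivity
  set m : ℝ := (∑ i ∈ Finset.Icc 1 N, x i) / N with hm
  set y : ℕ → ℝ := fun n => x n - m with hy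
  set a : ℕ → ℝ := fun n => if 1 ≤ n ∧ n < N then 1 / (x (n + 1) - x n) else 0 with ha
  have hicc : ∀ f : ℕ → ℝ, ∑ n ∈ Finset.Icc 1 N, f n = ∑ k ∈ Finset.range N, f (k + 1) := by
    intro f
    rw [← Finset.Ico_add_one_right_eq_Icc, Finset.sum_Ico_eq_sum_range]
    simp [add_comm]
  -- Rewrite Upot in terms of a
  have hUeq : Upot N x = ∑ n ∈ Finset.Icc 1 N, (a n - a (n - 1)) ^ 2 := by
    unfold Upot
    refine Finset.sum_congr rfl ?_
    intro n hn
    simp only [Finset.mem_Icc] at hn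
    obtain ⟨h1, h2⟩ := hn
    have e1 : (if n < N then 1 / (x (n + 1) - x n) else 0) = a n := by
      by_cases h : n < N <;> simp [ha, h, h1]
    have e2 : (if 1 < n then 1 / (x n - x (n - 1)) else 0) = a (n - 1) := by
      by_cases h : 1 < n
      · have h1' : 1 ≤ n - 1 := by omega
        have h2' : n - 1 < N := by omega
        have h3' : n - 1 + 1 = n := by omega
        simp [ha, h, h1', h2', h3']
      · have : n = 1 := by omega
        subst this
        simp [ha]
    rw [e1, e2]
  -- Key: Abel summation
  have hkey : ∑ n ∈ Finset.Icc 1 N, (a n - a (n - 1)) * y n = -((N : ℝ) - 1) := by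
    rw [hicc]
    have expand : ∀ k ∈ Finset.range N, (a (k + 1) - a ((k + 1) - 1)) * y (k + 1)
        = a (k + 1) * y (k + 1) - a k * y (k + 1) := by
      intro k _
      simp only [Nat.add_sub_cancel]
      ring
    rw [Finset.sum_congr rfl expand, Finset.sum_sub_distrib]
    have hNsplit : N = (N - 1) + 1 := by omega
    have first : ∑ k ∈ Finset.range N, a (k + 1) * y (k + 1)
        = ∑ k ∈ Finset.range (N - 1), a (k + 1) * y (k + 1) := by
      rw [hNsplit, Finset.sum_range_succ]
      have : a ((N - 1) + 1) = 0 := by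
        have : (N - 1) + 1 = N := by omega
        rw [this]; simp [ha]
      rw [this]; simp
    have second : ∑ k ∈ Finset.range N, a k * y (k + 1)
        = ∑ k ∈ Finset.range (N - 1), a (k + 1) * y (k + 1 + 1) := by
      rw [hNsplit, Finset.sum_range_succ']
      simp [ha]
    rw [first, second, ← Finset.sum_sub_distrib]
    have term : ∀ k ∈ Finset.range (N - 1),
        a (k + 1) * y (k + 1) - a (k + 1) * y (k + 1 + 1) = -1 := by
      intro k hk
      simp only [Finset.mem_range] at hk
      have h1 : 1 ≤ k + 1 := by omega
      have h2 : k + 1 < N := by omega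
      have hlt : x (k + 1 + 1) < x (k + 1) := hdec (k + 1) h1 h2
      have hne : x (k + 1 + 1) - x (k + 1) ≠ 0 := by linarith
      simp only [ha, h1, h2, and_self, if_true, hy]
      field_simp
      ring
    rw [Finset.sum_congr rfl term]
    simp only [Finset.sum_const, Finset.card_range, nsmul_eq_mul, mul_neg_one]
    push_cast [Nat.cast_sub (by omega : 1 ≤ N)]
    ring
  -- Cauchy–Schwarz
  have hCS := Finset.sum_mul_sq_le_sq_mul_sq (Finset.Icc 1 N)
      (fun n => a n - a (n - 1)) y
  rw [hkey] at hCS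
  have hvar : ((N : ℝ) - 1) ^ 2 ≤ Upot N x * ∑ n ∈ Finset.Icc 1 N, y n ^ 2 := by
    rw [hUeq]
    calc ((N : ℝ) - 1) ^ 2 = (-((N : ℝ) - 1)) ^ 2 := by ring
    _ ≤ _ := hCS
  refine ⟨hvar, ?_⟩
  -- variance ≤ V
  have hU0 : 0 ≤ Upot N x := by
    unfold Upot
    exact Finset.sum_nonneg fun n _ => sq_nonneg _
  have hsum : ∑ i ∈ Finset.Icc 1 N, x i = (N : ℝ) * m := by
    rw [hm]; field_simp
  have hvle : ∑ n ∈ Finset.Icc 1 N, y n ^ 2 ≤ Vpot N x := by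
    have hcard : (Finset.Icc 1 N).card = N := by
      rw [Nat.card_Icc]; omega
    have expand : ∑ n ∈ Finset.Icc 1 N, y n ^ 2
        = Vpot N x - 2 * m * (∑ i ∈ Finset.Icc 1 N, x i) + N * m ^ 2 := by
      unfold Vpot
      simp only [hy, sub_sq]
      rw [Finset.sum_add_distrib, Finset.sum_sub_distrib, Finset.sum_const, hcard]
      have h2m : ∑ n ∈ Finset.Icc 1 N, 2 * x n * m = 2 * m * ∑ i ∈ Finset.Icc 1 N, x i := by
        rw [Finset.mul_sum]
        exact Finset.sum_congr rfl fun n _ => by ring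
      rw [h2m]
      push_cast
      ring
    rw [expand, hsum]
    have : 0 ≤ (N : ℝ) * m ^ 2 := by positivity
    nlinarith
  calc ((N : ℝ) - 1) ^ 2 ≤ Upot N x * ∑ n ∈ Finset.Icc 1 N, y n ^ 2 := hvar
  _ ≤ Upot N x * Vpot N x := by
      exact mul_le_mul_of_nonneg_left hvle hU0
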